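/- Let B be a bipartite graph with maximum matching size κ, and let M be a matching such that the shortest augmenting path with respect to M has length greater than 2L. Then |M| ≥ κ − κ/L. -/

import Mathlib

/-- An augmenting path with respect to a matching `M`. -/
def SimpleGraph.Subgraph.IsAugPath {V : Type*} {G : SimpleGraph V} (M : G.Subgraph)
    {u v : V} (p : G.Walk u v) : Prop :=
  p.IsPath ∧ u ∉ M.support ∧ v ∉ M.support ∧ Odd p.length ∧
    List.Chain' (fun a b => (a ∈ M.edgeSet) ≠ (b ∈ M.edgeSet)) p.edges

open SimpleGraph
open scoped Classical

namespace AugAux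

variable {V : Type*} {G : SimpleGraph V}

noncomputable def partner (M : G.Subgraph) (v : V) : Option V :=
  if h : ∃ w, M.Adj v w then some h.choose else none

lemma partner_spec {M : G.Subgraph} {v w : V} (h : partner M v = some w) : M.Adj v w := by
  unfold partner at h
  split at h
  · next he => cases h; exact he.choose_spec
  · simp at h

lemma partner_eq_some {M : G.Subgraph} (hM : M.IsMatching) {v w : V} (hadj : M.Adj v w) :
    partner M v = some w := by
  unfold partner
  split
  · next he => exact congrArg some ((hM hadj.fst_mem).unique he.choose_spec hadj)
  · next he => exact absurd ⟨w, hadj⟩ he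

lemma partner_eq_none {M : G.Subgraph} {v : V} (h : v ∉ M.support) : partner M v = none := by
  unfold partner
  split
  · next he => exact absurd he h
  · rfl

lemma support_of_partner {M : G.Subgraph} {v w : V} (h : partner M v = some w) : v ∈ M.support :=
  ⟨w, partner_spec h⟩

lemma partner_symm {M : G.Subgraph} (hM : M.IsMatching) {v w : V} (h : partner M v = some w) :
    partner M w = some v := partner_eq_some hM (partner_spec h).symm

noncomputable def dStep (A B : G.Subgraph) (v : V) : Option V :=
  if partner A v = partner B v then none else partner A v

lemma dStep_eq_some {A B : G.Subgraph} {v w : V} :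
    dStep A B v = some w ↔ partner A v = some w ∧ partner B v ≠ some w := by
  unfold dStep
  split
  · next h =>
      constructor
      · intro hc; cases hc
      · rintro ⟨h1, h2⟩; rw [h] at h1; exact absurd h1 h2
  · next h =>
      constructor
      · intro h1; exact ⟨h1, fun hc => h (h1.trans hc.symm)⟩
      · exact fun h1 => h1.1

lemma dStep_symm {A B : G.Subgraph} (hA : A.IsMatching) (hB : B.IsMatching) {v w : V}
    (h : dStep A B v = some w) : dStep A B w = some v := by
  rw [dStep_eq_some] at h ⊢
  exact ⟨partner_symm hA h.1, fun hc => h.2 (partner_symm hB hc)⟩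


noncomputable def stepFn (M N : G.Subgraph) (k : ℕ) : V → Option V :=
  if k % 2 = 0 then dStep N M else dStep M N

lemma stepFn_symm {M N : G.Subgraph} (hM : M.IsMatching) (hN : N.IsMatching) {k : ℕ} {v w : V}
    (h : stepFn M N k v = some w) : stepFn M N k w = some v := by
  unfold stepFn at h ⊢
  split at h <;> simp_all only [ite_true, ite_false]
  · exact dStep_symm hN hM h
  · exact dStep_symm hM hN h

lemma stepFn_congr (M N : G.Subgraph) {k l : ℕ} (h : k % 2 = l % 2) :
    stepFn M N k = stepFn M N l := by
  unfold stepFn; rw [h]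

noncomputable def altSeq (M N : G.Subgraph) (u : V) : ℕ → Option V
  | 0 => some u
  | k+1 => (altSeq M N u k).bind (stepFn M N k)

@[simp] lemma altSeq_zero (M N : G.Subgraph) (u : V) : altSeq M N u 0 = some u := rfl

lemma altSeq_succ (M N : G.Subgraph) (u : V) (k : ℕ) :
    altSeq M N u (k+1) = (altSeq M N u k).bind (stepFn M N k) := rfl

lemma altSeq_succ_some {M N : G.Subgraph} {u : V} {k : ℕ} {w : V}
    (h : altSeq M N u (k+1) = some w) :
    ∃ v, altSeq M N u k = some v ∧ stepFn M N k v = some w := by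
  rw [altSeq_succ] at h
  exact Option.bind_eq_some_iff.mp h

lemma altSeq_some_of_le {M N : G.Subgraph} {u : V} {k l : ℕ} (hkl : k ≤ l) {w : V}
    (h : altSeq M N u l = some w) : ∃ v, altSeq M N u k = some v := by
  induction l generalizing w with
  | zero =>
    have hk0 : k = 0 := by omega
    subst hk0; exact ⟨w, h⟩
  | succ n ih =>
    rcases Nat.lt_or_ge k (n+1) with hk | hk
    · obtain ⟨v, hv, -⟩ := altSeq_succ_some h
      exact ih (by omega) hv
    · have hk1 : k = n + 1 := by omega
      subst hk1; exact ⟨w, h⟩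

lemma sync {M N : G.Subgraph} (hM : M.IsMatching) (hN : N.IsMatching) :
    ∀ a b (u u' v : V), u ∉ M.support → u' ∉ M.support →
    altSeq M N u a = some v → altSeq M N u' b = some v → a % 2 = b % 2 →
    a = b ∧ u = u' := by
  intro a
  induction a with
  | zero =>
    intro b u u' v hu hu' h1 h2 hpar
    simp only [altSeq_zero, Option.some_inj] at h1
    subst h1
    match b, hpar with
    | 0, _ =>
      simp only [altSeq_zero, Option.some_inj] at h2
      exact ⟨rfl, h2.symm⟩
    | (s+1), hpar =>
      exfalso
      obtain ⟨w, hw, hstep⟩ := altSeq_succ_some h2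
      have hs : s % 2 = 1 := by omega
      have hsy : stepFn M N s u = some w := stepFn_symm hM hN hstep
      unfold stepFn at hsy
      rw [if_neg (by omega)] at hsy
      exact hu (support_of_partner (dStep_eq_some.mp hsy).1)
  | succ t ih =>
    intro b u u' v hu hu' h1 h2 hpar
    match b, hpar with
    | 0, hpar =>
      exfalso
      simp only [altSeq_zero, Option.some_inj] at h2
      subst h2
      obtain ⟨w, hw, hstep⟩ := altSeq_succ_some h1
      have ht : t % 2 = 1 := by omega
      have hsy : stepFn M N t u' = some w := stepFn_symm hM hN hstep
      unfold stepFn at hsy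
      rw [if_neg (by omega)] at hsy
      exact hu' (support_of_partner (dStep_eq_some.mp hsy).1)
    | (s+1), hpar =>
      obtain ⟨w, hw, hstep⟩ := altSeq_succ_some h1
      obtain ⟨w', hw', hstep'⟩ := altSeq_succ_some h2
      have hts : t % 2 = s % 2 := by omega
      have e1 : stepFn M N t v = some w := stepFn_symm hM hN hstep
      have e2 : stepFn M N s v = some w' := stepFn_symm hM hN hstep'
      rw [← stepFn_congr M N hts, e1, Option.some_inj] at e2
      subst e2
      obtain ⟨h1', h2'⟩ := ih s u u' w hu hu' hw hw' hts
      exact ⟨by omega, h2'⟩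

lemma rev {M N : G.Subgraph} (hM : M.IsMatching) (hN : N.IsMatching) :
    ∀ b a (u u' v : V),
    altSeq M N u a = some v → altSeq M N u' b = some v → a % 2 ≠ b % 2 →
    altSeq M N u (a + b) = some u' := by
  intro b
  induction b with
  | zero =>
    intro a u u' v h1 h2 _
    simp only [altSeq_zero, Option.some_inj] at h2
    subst h2; exact h1
  | succ s ih =>
    intro a u u' v h1 h2 hpar
    obtain ⟨w, hw, hstep⟩ := altSeq_succ_some h2
    have e1 : stepFn M N s v = some w := stepFn_symm hM hN hstep
    have e2 : altSeq M N u (a+1) = some w := by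
      rw [altSeq_succ, h1, Option.bind_some, stepFn_congr M N (show a % 2 = s % 2 by omega)]
      exact e1
    have := ih (a+1) u u' w e2 hw (by omega)
    rw [show a + 1 + s = a + (s+1) by omega] at this
    exact this

lemma pal {M N : G.Subgraph} (hM : M.IsMatching) (hN : N.IsMatching) :
    ∀ b a (u v : V), a < b → a % 2 ≠ b % 2 →
    altSeq M N u a = some v → altSeq M N u b = some v → False := by
  intro b
  induction b using Nat.strong_induction_on with
  | _ b ihb =>
    intro a u v hab hpar h1 h2
    match b, hab with
    | (s+1), hab =>
      obtain ⟨w, hw, hstep⟩ := altSeq_succ_some h2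
      rcases Nat.lt_or_ge a s with has | has
      · have e1 : stepFn M N s v = some w := stepFn_symm hM hN hstep
        have e2 : altSeq M N u (a+1) = some w := by
          rw [altSeq_succ, h1, Option.bind_some, stepFn_congr M N (show a % 2 = s % 2 by omega)]
          exact e1
        rcases Nat.lt_or_ge (a+1) s with h' | h'
        · exact ihb s (by omega) (a+1) u w (by omega) (by omega) e2 hw
        · -- a + 1 = s : but then parity a ≠ s+1 forces a ≢ a+2, contradiction
          omega
      · -- a = s : v = w, step maps v to itself
        have has' : a = s := by omega
        subst has'
        have hvw : w = v := by rw [hw] at h1; exact Option.some_inj.mp h1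
        subst hvw
        unfold stepFn at hstep
        split at hstep
        · exact G.loopless.irrefl _ (partner_spec (dStep_eq_some.mp hstep).1).adj_sub
        · exact G.loopless.irrefl _ (partner_spec (dStep_eq_some.mp hstep).1).adj_sub

lemma altSeq_inj {M N : G.Subgraph} (hM : M.IsMatching) (hN : N.IsMatching) {u : V}
    (hu : u ∉ M.support) {a b : ℕ} {v : V}
    (h1 : altSeq M N u a = some v) (h2 : altSeq M N u b = some v) : a = b := by
  by_cases hpar : a % 2 = b % 2
  · exact (sync hM hN a b u u v hu hu h1 h2 hpar).1
  · exfalso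
    rcases Nat.lt_trichotomy a b with h | h | h
    · exact pal hM hN b a u v h hpar h1 h2
    · exact hpar (by rw [h])
    · exact pal hM hN a b u v h (Ne.symm hpar) h2 h1


lemma altSeq_none_of_le {M N : G.Subgraph} {u : V} {k l : ℕ} (hkl : k ≤ l)
    (h : altSeq M N u k = none) : altSeq M N u l = none := by
  by_contra hc
  obtain ⟨v, hv⟩ := Option.ne_none_iff_exists'.mp hc
  obtain ⟨w, hw⟩ := altSeq_some_of_le hkl hv
  rw [h] at hw; cases hw

lemma altSeq_terminates [Fintype V] {M N : G.Subgraph} (hM : M.IsMatching) (hN : N.IsMatching)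
    {u : V} (hu : u ∉ M.support) : ∃ k, altSeq M N u k = none := by
  by_contra hc
  push_neg at hc
  have hf : ∀ k, ∃ v, altSeq M N u k = some v := fun k => Option.ne_none_iff_exists'.mp (hc k)
  set f : ℕ → V := fun k => (altSeq M N u k).getD u with hfdef
  have hfs : ∀ k, altSeq M N u k = some (f k) := by
    intro k
    obtain ⟨v, hv⟩ := hf k
    rw [hv]; simp [hfdef, hv]
  have hinj : Function.Injective f := by
    intro a b hab
    exact altSeq_inj hM hN hu (hfs a) (hab ▸ hfs b)
  obtain ⟨a, b, hab, hfab⟩ := Finite.exists_ne_map_eq_of_infinite f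
  exact hab (hinj hfab)

noncomputable def len (M N : G.Subgraph) (u : V) : ℕ :=
  (if h : ∃ k, altSeq M N u k = none then Nat.find h else 0) - 1

section Len

variable {M N : G.Subgraph} {u : V}

lemma len_spec (hterm : ∃ k, altSeq M N u k = none) :
    altSeq M N u (len M N u + 1) = none ∧ ∀ k ≤ len M N u, altSeq M N u k ≠ none := by
  have hpos : 0 < Nat.find hterm := by
    apply Nat.pos_of_ne_zero
    intro h0
    have hsp := Nat.find_spec hterm
    rw [h0] at hsp
    exact (Option.some_ne_none u) (by rw [← hsp]; rfl)
  have hlen : len M N u = Nat.find hterm - 1 := by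
    unfold len; rw [dif_pos hterm]
  constructor
  · rw [hlen, Nat.sub_add_cancel hpos]
    exact Nat.find_spec hterm
  · intro k hk
    exact Nat.find_min hterm (by omega)

lemma altSeq_len_succ (hterm : ∃ k, altSeq M N u k = none) :
    altSeq M N u (len M N u + 1) = none := (len_spec hterm).1

lemma altSeq_le_len (hterm : ∃ k, altSeq M N u k = none) {k : ℕ} (hk : k ≤ len M N u) :
    ∃ v, altSeq M N u k = some v :=
  Option.ne_none_iff_exists'.mp ((len_spec hterm).2 k hk)

lemma le_len_of_some (hterm : ∃ k, altSeq M N u k = none) {k : ℕ} {v : V}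
    (h : altSeq M N u k = some v) : k ≤ len M N u := by
  by_contra hc
  have : altSeq M N u k = none :=
    altSeq_none_of_le (by omega) (altSeq_len_succ hterm)
  rw [this] at h; cases h

noncomputable def endV (M N : G.Subgraph) (u : V) : V :=
  (altSeq M N u (len M N u)).getD u

lemma altSeq_endV (hterm : ∃ k, altSeq M N u k = none) :
    altSeq M N u (len M N u) = some (endV M N u) := by
  obtain ⟨v, hv⟩ := altSeq_le_len hterm (le_refl _)
  rw [hv]; unfold endV; rw [hv]; rfl

lemma len_pos (hN : N.IsMatching) (hterm : ∃ k, altSeq M N u k = none)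
    (huN : u ∈ N.support) (huM : u ∉ M.support) : 1 ≤ len M N u := by
  obtain ⟨w, hw⟩ := huN
  have h1 : altSeq M N u 1 = some w := by
    rw [altSeq_succ, altSeq_zero, Option.bind_some]
    unfold stepFn
    rw [if_pos rfl]
    unfold dStep
    rw [partner_eq_some hN hw, partner_eq_none huM]
    simp
  exact le_len_of_some hterm h1

/-- Arrival characterization: if `1 ≤ len`, the last vertex has a known partner. -/
lemma endpoint_odd (hM : M.IsMatching) (hN : N.IsMatching)
    (hterm : ∃ k, altSeq M N u k = none) (hlen1 : 1 ≤ len M N u)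
    (hodd : len M N u % 2 = 1) :
    endV M N u ∉ M.support ∧ endV M N u ∈ N.support := by
  set l := len M N u with hl
  obtain ⟨p, hp⟩ := altSeq_le_len hterm (show l - 1 ≤ l by omega)
  have he : altSeq M N u l = some (endV M N u) := altSeq_endV hterm
  have harr : stepFn M N (l-1) p = some (endV M N u) := by
    have := altSeq_succ_some (show altSeq M N u ((l-1)+1) = some (endV M N u) by
      rw [show l - 1 + 1 = l by omega]; exact he)
    obtain ⟨q, hq, hstep⟩ := this
    rw [hp] at hq
    cases hq
    exact hstep
  -- arrival step is an N-step (index l-1 is even)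
  have harrN : dStep N M p = some (endV M N u) := by
    unfold stepFn at harr
    rw [if_pos (by omega)] at harr
    exact harr
  have hsymm : dStep N M (endV M N u) = some p := dStep_symm hN hM harrN
  obtain ⟨hNe, hMe⟩ := dStep_eq_some.mp hsymm
  -- the next step (an M-step) is undefined
  have hnone : (altSeq M N u (l+1)) = none := altSeq_len_succ hterm
  have hstepnone : dStep M N (endV M N u) = none := by
    rw [altSeq_succ, he, Option.bind_some] at hnone
    unfold stepFn at hnone
    rw [if_neg (by omega)] at hnone
    exact hnone
  have hMnone : partner M (endV M N u) = none := by
    unfold dStep at hstepnone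
    split at hstepnone
    · next hcond =>
      exfalso
      exact hMe (hcond.trans hNe)
    · exact hstepnone
  constructor
  · intro hsupp
    obtain ⟨w, hw⟩ := hsupp
    rw [partner_eq_some hM hw] at hMnone
    cases hMnone
  · exact support_of_partner hNe

lemma endpoint_even (hM : M.IsMatching) (hN : N.IsMatching)
    (hterm : ∃ k, altSeq M N u k = none) (hlen1 : 1 ≤ len M N u)
    (heven : len M N u % 2 = 0) :
    endV M N u ∈ M.support ∧ endV M N u ∉ N.support := by
  set l := len M N u with hl
  obtain ⟨p, hp⟩ := altSeq_le_len hterm (show l - 1 ≤ l by omega)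
  have he : altSeq M N u l = some (endV M N u) := altSeq_endV hterm
  have harr : stepFn M N (l-1) p = some (endV M N u) := by
    have := altSeq_succ_some (show altSeq M N u ((l-1)+1) = some (endV M N u) by
      rw [show l - 1 + 1 = l by omega]; exact he)
    obtain ⟨q, hq, hstep⟩ := this
    rw [hp] at hq
    cases hq
    exact hstep
  have harrM : dStep M N p = some (endV M N u) := by
    unfold stepFn at harr
    rw [if_neg (by omega)] at harr
    exact harr
  have hsymm : dStep M N (endV M N u) = some p := dStep_symm hM hN harrM
  obtain ⟨hMe, hNe⟩ := dStep_eq_some.mp hsymm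
  have hnone : (altSeq M N u (l+1)) = none := altSeq_len_succ hterm
  have hstepnone : dStep N M (endV M N u) = none := by
    rw [altSeq_succ, he, Option.bind_some] at hnone
    unfold stepFn at hnone
    rw [if_pos (by omega)] at hnone
    exact hnone
  have hNnone : partner N (endV M N u) = none := by
    unfold dStep at hstepnone
    split at hstepnone
    · next hcond =>
      exfalso
      exact hNe (hcond.trans hMe)
    · exact hstepnone
  constructor
  · exact support_of_partner hMe
  · intro hsupp
    obtain ⟨w, hw⟩ := hsupp
    rw [partner_eq_some hN hw] at hNnone
    cases hNnone

end Len


noncomputable def xx (M N : G.Subgraph) (u : V) (k : ℕ) : V := (altSeq M N u k).getD u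

lemma xx_eq {M N : G.Subgraph} {u : V} {k : ℕ} {v : V} (h : altSeq M N u k = some v) :
    xx M N u k = v := by unfold xx; rw [h]; rfl

@[simp] lemma xx_zero (M N : G.Subgraph) (u : V) : xx M N u 0 = u := rfl

lemma altSeq_xx {M N : G.Subgraph} {u : V} {k : ℕ}
    (h : altSeq M N u k ≠ none) : altSeq M N u k = some (xx M N u k) := by
  obtain ⟨v, hv⟩ := Option.ne_none_iff_exists'.mp h
  rw [hv, xx_eq hv]

lemma step_adj {M N : G.Subgraph} {u : V} {k : ℕ}
    (h : altSeq M N u (k+1) ≠ none) : G.Adj (xx M N u k) (xx M N u (k+1)) := by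
  obtain ⟨w, hw⟩ := Option.ne_none_iff_exists'.mp h
  obtain ⟨v, hv, hstep⟩ := altSeq_succ_some hw
  rw [xx_eq hv, xx_eq hw]
  unfold stepFn at hstep
  split at hstep
  · exact (partner_spec (dStep_eq_some.mp hstep).1).adj_sub
  · exact (partner_spec (dStep_eq_some.mp hstep).1).adj_sub

lemma step_edge_mem {M N : G.Subgraph} (hM : M.IsMatching) {u : V} {k : ℕ}
    (h : altSeq M N u (k+1) ≠ none) :
    (s(xx M N u k, xx M N u (k+1)) ∈ M.edgeSet) ↔ k % 2 = 1 := by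
  obtain ⟨w, hw⟩ := Option.ne_none_iff_exists'.mp h
  obtain ⟨v, hv, hstep⟩ := altSeq_succ_some hw
  rw [xx_eq hv, xx_eq hw, SimpleGraph.Subgraph.mem_edgeSet]
  unfold stepFn at hstep
  split at hstep
  · next hk =>
    obtain ⟨h1, h2⟩ := dStep_eq_some.mp hstep
    constructor
    · intro hadj
      exact absurd (partner_eq_some hM hadj) h2
    · omega
  · next hk =>
    obtain ⟨h1, h2⟩ := dStep_eq_some.mp hstep
    exact ⟨fun _ => by omega, fun _ => partner_spec h1⟩

noncomputable def wk (M N : G.Subgraph) (u : V) :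
    (r a : ℕ) → (h : altSeq M N u (a + r) ≠ none) → G.Walk (xx M N u a) (xx M N u (a + r))
  | 0, a, _ => SimpleGraph.Walk.nil
  | (r+1), a, h =>
    SimpleGraph.Walk.cons
      (step_adj (fun hc => h (altSeq_none_of_le (by omega) hc)))
      ((wk M N u r (a+1) (by rw [show a + 1 + r = a + (r+1) by omega]; exact h)).copy rfl
        (congrArg (xx M N u) (by omega)))

lemma wk_length {M N : G.Subgraph} {u : V} :
    ∀ (r a : ℕ) (h : altSeq M N u (a + r) ≠ none), (wk M N u r a h).length = r := by
  intro r
  induction r with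
  | zero => intro a h; rfl
  | succ n ih =>
    intro a h
    simp only [wk, SimpleGraph.Walk.length_cons, SimpleGraph.Walk.length_copy]
    rw [ih]

lemma wk_support {M N : G.Subgraph} {u : V} :
    ∀ (r a : ℕ) (h : altSeq M N u (a + r) ≠ none),
      (wk M N u r a h).support = (List.range (r+1)).map (fun i => xx M N u (a+i)) := by
  intro r
  induction r with
  | zero =>
    intro a h
    simp [wk, SimpleGraph.Walk.support_nil, List.range_succ]
  | succ n ih =>
    intro a h
    simp only [wk, SimpleGraph.Walk.support_cons, SimpleGraph.Walk.support_copy]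
    rw [ih]
    rw [List.range_succ_eq_map (n := n+1), List.map_cons, List.map_map]
    congr 1
    apply List.map_congr_left
    intro i _
    simp only [Function.comp_apply]
    congr 1
    omega

lemma wk_edges {M N : G.Subgraph} {u : V} :
    ∀ (r a : ℕ) (h : altSeq M N u (a + r) ≠ none),
      (wk M N u r a h).edges = (List.range r).map (fun i => s(xx M N u (a+i), xx M N u (a+i+1))) := by
  intro r
  induction r with
  | zero =>
    intro a h
    simp [wk]
  | succ n ih =>
    intro a h
    simp only [wk, SimpleGraph.Walk.edges_cons, SimpleGraph.Walk.edges_copy]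
    rw [ih]
    rw [List.range_succ_eq_map (n := n), List.map_cons, List.map_map]
    simp only [Nat.add_zero]
    congr 1
    apply List.map_congr_left
    intro i _
    simp only [Function.comp_apply, Nat.succ_eq_add_one, Sym2.eq_iff]
    left
    exact ⟨congrArg _ (by omega), congrArg _ (by omega)⟩

lemma aug_path_exists [Fintype V] {M N : G.Subgraph} (hM : M.IsMatching) (hN : N.IsMatching)
    {u : V} (hu : u ∉ M.support) (huN : u ∈ N.support) (hodd : len M N u % 2 = 1) :
    ∃ p : G.Walk u (endV M N u), M.IsAugPath p ∧ p.length = len M N u := by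
  have hterm := altSeq_terminates hM hN hu
  set l := len M N u with hldef
  have hlen1 : 1 ≤ l := len_pos hN hterm huN hu
  have hne : altSeq M N u (0 + l) ≠ none := by
    rw [Nat.zero_add, altSeq_endV hterm]
    exact Option.some_ne_none _
  have hend : xx M N u (0 + l) = endV M N u := by
    rw [Nat.zero_add]; exact xx_eq (altSeq_endV hterm)
  refine ⟨(wk M N u l 0 hne).copy (xx_zero M N u) hend, ⟨?_, hu, ?_, ?_, ?_⟩, ?_⟩
  · -- IsPath
    rw [SimpleGraph.Walk.isPath_def, SimpleGraph.Walk.support_copy, wk_support]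
    apply List.Nodup.map_on _ List.nodup_range
    intro i hi j hj hij
    rw [List.mem_range] at hi hj
    simp only [Nat.zero_add] at hij
    obtain ⟨vi, hvi⟩ := altSeq_le_len hterm (show i ≤ l by omega)
    obtain ⟨vj, hvj⟩ := altSeq_le_len hterm (show j ≤ l by omega)
    rw [xx_eq hvi, xx_eq hvj] at hij
    subst hij
    exact altSeq_inj hM hN hu hvi hvj
  · exact (endpoint_odd hM hN hterm hlen1 hodd).1
  · rw [SimpleGraph.Walk.length_copy, wk_length]
    exact Nat.odd_iff.mpr hodd
  · -- alternating chain
    rw [SimpleGraph.Walk.edges_copy, wk_edges]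
    unfold List.Chain'
    rw [List.isChain_map]
    obtain ⟨n, hn⟩ : ∃ n, l = n + 1 := ⟨l - 1, by omega⟩
    rw [hn, List.isChain_range_succ]
    intro k hk
    simp only [Nat.zero_add]
    have hk1 : altSeq M N u (k+1) ≠ none := by
      rw [altSeq_xx (h := ?_)]
      · exact Option.some_ne_none _
      · intro hc
        exact hne (by rw [Nat.zero_add]; exact altSeq_none_of_le (by omega) hc)
    have hk2 : altSeq M N u (k+2) ≠ none := by
      intro hc
      exact hne (by rw [Nat.zero_add]; exact altSeq_none_of_le (by omega) hc)
    have h1 := step_edge_mem hM hk1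
    have h2 := step_edge_mem (k := k+1) hM hk2
    intro heq
    rw [eq_iff_iff] at heq
    rw [h1, show k+1+1 = k+2 by omega] at heq
    rw [h2] at heq
    omega
  · rw [SimpleGraph.Walk.length_copy, wk_length]


lemma support_card [Fintype V] {P : G.Subgraph} (hP : P.IsMatching) :
    P.support.toFinset.card = 2 * P.edgeSet.toFinset.card := by
  classical
  set mate : V → V := fun v => (partner P v).getD v with hmate
  have hmate_eq : ∀ {v w}, P.Adj v w → mate v = w := by
    intro v w hw
    rw [hmate]; simp only []
    rw [partner_eq_some hP hw]
    rfl
  have hmate_adj : ∀ v ∈ P.support, P.Adj v (mate v) := by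
    rintro v ⟨w, hw⟩
    rw [hmate_eq hw]
    exact hw
  set f : V → Sym2 V := fun v => s(v, mate v) with hf
  rw [Finset.card_eq_sum_card_image f]
  have himg : P.support.toFinset.image f = P.edgeSet.toFinset := by
    ext e
    induction e with
    | h a b =>
      simp only [Finset.mem_image, Set.mem_toFinset]
      constructor
      · rintro ⟨v, hv, hfv⟩
        rw [← hfv]
        exact hmate_adj v hv
      · intro he
        rw [SimpleGraph.Subgraph.mem_edgeSet] at he
        exact ⟨a, ⟨b, he⟩, by rw [hf]; simp only []; rw [hmate_eq he]⟩
  rw [himg]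
  rw [Finset.sum_congr rfl (g := fun _ => 2) ?_]
  · rw [Finset.sum_const, smul_eq_mul, mul_comm]
  · intro e he
    revert he
    induction e with
    | h a b =>
      intro he
      rw [Set.mem_toFinset, SimpleGraph.Subgraph.mem_edgeSet] at he
      have hfil : (P.support.toFinset.filter (fun v => f v = s(a, b))) = {a, b} := by
        ext v
        simp only [Finset.mem_filter, Set.mem_toFinset, Finset.mem_insert, Finset.mem_singleton]
        constructor
        · rintro ⟨hv, hfv⟩
          rw [hf] at hfv
          simp only [Sym2.eq_iff] at hfv
          rcases hfv with ⟨h1, -⟩ | ⟨h1, -⟩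
          · exact Or.inl h1
          · exact Or.inr h1
        · rintro (rfl | rfl)
          · exact ⟨⟨b, he⟩, by rw [hf]; simp only []; rw [hmate_eq he]⟩
          · exact ⟨⟨a, he.symm⟩, by
              rw [hf]; simp only []
              rw [hmate_eq he.symm]
              exact Sym2.eq_swap⟩
      rw [hfil]
      exact Finset.card_pair he.ne


lemma cross_end [Fintype V] {M N : G.Subgraph} (hM : M.IsMatching) (hN : N.IsMatching)
    {u u' v : V} (hu : u ∉ M.support) (hu' : u' ∉ M.support) {a b : ℕ}
    (h1 : altSeq M N u a = some v) (h2 : altSeq M N u' b = some v) (hpar : a % 2 ≠ b % 2) :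
    endV M N u = u' ∧ len M N u = a + b := by
  have hterm := altSeq_terminates hM hN hu
  set c := a + b with hc
  have hcodd : c % 2 = 1 := by omega
  have hcu' : altSeq M N u c = some u' := rev hM hN b a u u' v h1 h2 hpar
  have hnone : altSeq M N u (c+1) = none := by
    rw [altSeq_succ, hcu', Option.bind_some]
    unfold stepFn
    rw [if_neg (by omega)]
    unfold dStep
    rw [partner_eq_none hu']
    split
    · rfl
    · rfl
  have hlenc : len M N u = c := by
    have hle : c ≤ len M N u := le_len_of_some hterm hcu'
    rcases Nat.lt_or_ge c (len M N u) with hlt | hge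
    · exfalso
      obtain ⟨w, hw⟩ := altSeq_le_len hterm (show c + 1 ≤ len M N u by omega)
      rw [hnone] at hw; cases hw
    · omega
  refine ⟨?_, hlenc⟩
  unfold endV
  rw [hlenc, hcu']
  rfl

end AugAux

open AugAux

/-- If every augmenting path with respect to the matching `M` has length greater than `2L`,
then `|M| ≥ κ - κ/L`, where `κ` is the maximum matching cardinality. -/
theorem stmt_8 {V : Type*} [Fintype V] (G : SimpleGraph V) (c : V → Bool)
    (hbip : ∀ u v, G.Adj u v → c u ≠ c v)
    (M : G.Subgraph) (hM : M.IsMatching) (κ L : ℕ) (hL : 0 < L)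
    (hub : ∀ N : G.Subgraph, N.IsMatching → N.edgeSet.ncard ≤ κ)
    (hex : ∃ N : G.Subgraph, N.IsMatching ∧ N.edgeSet.ncard = κ)
    (hlong : ∀ (u v : V) (p : G.Walk u v), M.IsAugPath p → 2 * L < p.length) :
    κ - κ / L ≤ M.edgeSet.ncard := by
  classical
  obtain ⟨N, hN, hNcard⟩ := hex
  set m := M.edgeSet.ncard with hm
  have hmκ : m ≤ κ := hub M hM
  set S : Finset V := (N.support \ M.support).toFinset with hS
  set T : Finset V := (M.support \ N.support).toFinset with hT
  set A : Finset V := S.filter (fun u => len M N u % 2 = 1) with hA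
  have hSmem : ∀ u ∈ S, u ∈ N.support ∧ u ∉ M.support := by
    intro u hu; rw [hS, Set.mem_toFinset, Set.mem_diff] at hu; exact hu
  have hlen_big : ∀ u ∈ A, 2 * L < len M N u := by
    intro u huA
    rw [hA, Finset.mem_filter] at huA
    obtain ⟨huS, hodd⟩ := huA
    obtain ⟨huN, huM⟩ := hSmem u huS
    obtain ⟨p, hp, hplen⟩ := aug_path_exists hM hN huM huN hodd
    have := hlong _ _ p hp
    omega
  -- some facts for members of A
  have hAfacts : ∀ u ∈ A, u ∉ M.support ∧ ∀ k ≤ 2 * L, ∃ v, altSeq M N u k = some v := by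
    intro u huA
    have hbig := hlen_big u huA
    rw [hA, Finset.mem_filter] at huA
    obtain ⟨huS, hodd⟩ := huA
    obtain ⟨huN, huM⟩ := hSmem u huS
    have hterm := altSeq_terminates hM hN huM
    exact ⟨huM, fun k hk => altSeq_le_len hterm (by omega)⟩
  -- cardinalities
  have hScard : S.card + (N.support.toFinset ∩ M.support.toFinset).card
      = N.support.toFinset.card := by
    rw [hS, Set.toFinset_diff]
    exact Finset.card_sdiff_add_card_inter _ _
  have hTcard : T.card + (N.support.toFinset ∩ M.support.toFinset).card
      = M.support.toFinset.card := by
    rw [hT, Set.toFinset_diff, Finset.inter_comm]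
    exact Finset.card_sdiff_add_card_inter _ _
  have hNs : N.support.toFinset.card = 2 * κ := by
    rw [support_card hN, ← Set.ncard_eq_toFinset_card', hNcard]
  have hMs : M.support.toFinset.card = 2 * m := by
    rw [support_card hM, ← Set.ncard_eq_toFinset_card']
  -- B ≤ T
  have hB : (S.filter (fun u => ¬ (len M N u % 2 = 1))).card ≤ T.card := by
    apply Finset.card_le_card_of_injOn (endV M N)
    · intro u hu
      rw [Finset.mem_coe, Finset.mem_filter] at hu
      obtain ⟨huS, hev⟩ := hu
      obtain ⟨huN, huM⟩ := hSmem u huS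
      have hterm := altSeq_terminates hM hN huM
      have h1 := len_pos hN hterm huN huM
      obtain ⟨hMs', hNs'⟩ := endpoint_even hM hN hterm h1 (by omega)
      rw [hT, Finset.mem_coe, Set.mem_toFinset, Set.mem_diff]
      exact ⟨hMs', hNs'⟩
    · intro u hu u' hu' heq
      rw [Finset.coe_filter, Set.mem_setOf_eq] at hu hu'
      obtain ⟨huS, hev⟩ := hu
      obtain ⟨huS', hev'⟩ := hu'
      obtain ⟨huN, huM⟩ := hSmem u huS
      obtain ⟨huN', huM'⟩ := hSmem u' huS'
      have hterm := altSeq_terminates hM hN huM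
      have hterm' := altSeq_terminates hM hN huM'
      have h1 := altSeq_endV hterm
      have h2 := altSeq_endV hterm'
      rw [heq] at h1
      exact (sync hM hN _ _ u u' _ huM huM' h1 h2 (by omega)).2
  have hAB : A.card + (S.filter (fun u => ¬ (len M N u % 2 = 1))).card = S.card := by
    rw [hA]
    exact Finset.card_filter_add_card_filter_not _
  -- pigeonhole on M-edges of the augmenting paths
  set f2 : V × ℕ → Sym2 V :=
    fun q => s(xx M N q.1 (2*q.2+1), xx M N q.1 (2*q.2+1+1)) with hf2
  have hmaps : ∀ q ∈ A ×ˢ Finset.range L, f2 q ∈ M.edgeSet.toFinset := by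
    rintro ⟨u, i⟩ hq
    rw [Finset.mem_product, Finset.mem_range] at hq
    obtain ⟨huA, hiL⟩ := hq
    obtain ⟨huM, hdef⟩ := hAfacts u huA
    obtain ⟨w, hw⟩ := hdef (2*i+1+1) (by omega)
    have hne : altSeq M N u (2*i+1+1) ≠ none := by rw [hw]; exact Option.some_ne_none _
    have := (step_edge_mem hM hne).mpr (by omega)
    rw [Set.mem_toFinset]
    exact this
  have hfib : ∀ e ∈ M.edgeSet.toFinset, ((A ×ˢ Finset.range L).filter (fun q => f2 q = e)).card ≤ 2 := by
    intro e he
    set Fib := (A ×ˢ Finset.range L).filter (fun q => f2 q = e) with hFib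
    have hmem : ∀ q ∈ Fib, q.1 ∈ A ∧ q.2 < L ∧ f2 q = e := by
      intro q hq
      rw [hFib, Finset.mem_filter, Finset.mem_product, Finset.mem_range] at hq
      exact ⟨hq.1.1, hq.1.2, hq.2⟩
    have hsome : ∀ q ∈ Fib, ∀ k ≤ 2 * L, ∃ v, altSeq M N q.1 k = some v :=
      fun q hq => (hAfacts q.1 (hmem q hq).1).2
    -- claim 1 : equal first components force equality
    have claim1 : ∀ p q, p ∈ Fib → q ∈ Fib → p.1 = q.1 → p = q := by
      rintro ⟨u, i⟩ ⟨u', j⟩ hp hq h1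
      cases h1
      obtain ⟨huA, hiL, hfe⟩ := hmem _ hp
      obtain ⟨-, hjL, hfe'⟩ := hmem _ hq
      have huM := (hAfacts u huA).1
      obtain ⟨v1, hv1⟩ := hsome _ hp (2*i+1) (by omega)
      obtain ⟨v2, hv2⟩ := hsome _ hp (2*i+1+1) (by omega)
      obtain ⟨w1, hw1⟩ := hsome _ hq (2*j+1) (by omega)
      obtain ⟨w2, hw2⟩ := hsome _ hq (2*j+1+1) (by omega)
      have heq : f2 (u, i) = f2 (u, j) := hfe.trans hfe'.symm
      rw [hf2] at heq
      simp only [xx_eq hv1, xx_eq hv2, xx_eq hw1, xx_eq hw2, Sym2.eq_iff] at heq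
      rcases heq with ⟨ha, -⟩ | ⟨ha, -⟩
      · subst ha
        have := altSeq_inj hM hN huM hv1 hw1
        have hij : i = j := by omega
        rw [hij]
      · subst ha
        have := altSeq_inj hM hN huM hv1 hw2
        omega
    -- claim 2 : distinct first components forces second to be the endpoint of the first
    have claim2 : ∀ p q, p ∈ Fib → q ∈ Fib → p.1 ≠ q.1 → q.1 = endV M N p.1 := by
      rintro ⟨u, i⟩ ⟨u', j⟩ hp hq hne
      obtain ⟨huA, hiL, hfe⟩ := hmem _ hp
      obtain ⟨huA', hjL, hfe'⟩ := hmem _ hq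
      have huM := (hAfacts u huA).1
      have huM' := (hAfacts u' huA').1
      obtain ⟨v1, hv1⟩ := hsome _ hp (2*i+1) (by omega)
      obtain ⟨v2, hv2⟩ := hsome _ hp (2*i+1+1) (by omega)
      obtain ⟨w1, hw1⟩ := hsome _ hq (2*j+1) (by omega)
      obtain ⟨w2, hw2⟩ := hsome _ hq (2*j+1+1) (by omega)
      have heq : f2 (u, i) = f2 (u', j) := hfe.trans hfe'.symm
      rw [hf2] at heq
      simp only [xx_eq hv1, xx_eq hv2, xx_eq hw1, xx_eq hw2, Sym2.eq_iff] at heq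
      rcases heq with ⟨ha, hb⟩ | ⟨ha, hb⟩
      · exfalso
        subst ha
        exact hne (sync hM hN _ _ u u' _ huM huM' hv1 hw1 (by omega)).2
      · subst ha
        exact ((cross_end hM hN huM huM' hv1 hw2 (by omega)).1).symm
    by_contra hgt
    obtain ⟨p, q, r, hp, hq, hr, hpq, hpr, hqr⟩ := (Finset.two_lt_card_iff (s := Fib)).mp (by omega)
    by_cases h1 : p.1 = q.1
    · exact hpq (claim1 _ _ hp hq h1)
    by_cases h2 : p.1 = r.1
    · exact hpr (claim1 _ _ hp hr h2)
    have e1 := claim2 _ _ hp hq h1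
    have e2 := claim2 _ _ hp hr h2
    exact hqr (claim1 _ _ hq hr (e1.trans e2.symm))
  have hP2card : A.card * L ≤ 2 * M.edgeSet.toFinset.card := by
    have := Finset.card_le_mul_card_image_of_maps_to hmaps 2 hfib
    rw [Finset.card_product, Finset.card_range] at this
    exact this
  have hedge : M.edgeSet.toFinset.card = m := (Set.ncard_eq_toFinset_card' _).symm
  have hAge : 2 * (κ - m) ≤ A.card := by omega
  have h3 : 2 * ((κ - m) * L) ≤ 2 * m := by
    calc 2 * ((κ - m) * L) = (2 * (κ - m)) * L := by ring
    _ ≤ A.card * L := Nat.mul_le_mul_right L hAge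
    _ ≤ 2 * M.edgeSet.toFinset.card := hP2card
    _ = 2 * m := by rw [hedge]
  have h4 : (κ - m) * L ≤ m := Nat.le_of_mul_le_mul_left h3 (by omega)
  have h5 : κ - m ≤ κ / L := (Nat.le_div_iff_mul_le hL).mpr (le_trans h4 hmκ)
  calc κ - κ / L ≤ κ - (κ - m) := Nat.sub_le_sub_left h5 κ
  _ = m := Nat.sub_sub_self hmκ
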